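/- arXiv:1309.3341 — 8 statements merged into one kernel-verified Lean document; each statement's English description precedes it below -/
import Mathlib

section
/- Let G be a group and let g₁, …, g_k ∈ G be torsion elements of finite orders d₁, …, d_k respectively, where the dᵢ are pairwise distinct integers greater than 1. Then the family consisting of the identity 1 of ℂ[G] together with the idempotents p_{g₁}, …, p_{g_k} is linearly independent over ℂ in the complex group algebra ℂ[G]. -/
/-- The idempotent associated to an element `g` of finite order `d`:
`p_g = (1/d) · ∑_{t=0}^{d-1} g^t ∈ ℂ[G]`. -/
noncomputable def pIdem {G : Type*} [Group G] (g : G) (d : ℕ) : MonoidAlgebra ℂ G :=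
  (d : ℂ)⁻¹ • ∑ t ∈ Finset.range d, MonoidAlgebra.of ℂ G (g ^ t)

open Classical in
lemma pIdem_apply {G : Type*} [Group G] (g : G) (d : ℕ) (a : G) :
    (pIdem g d).coeff a = (d : ℂ)⁻¹ * ∑ t ∈ Finset.range d, if g ^ t = a then 1 else 0 := by
  unfold pIdem
  rw [MonoidAlgebra.coeff_smul_apply, MonoidAlgebra.coeff_sum, Finsupp.finset_sum_apply]
  simp [MonoidAlgebra.of_apply, MonoidAlgebra.coeff_single, Finsupp.single_apply]

open Classical in
lemma pIdem_apply_self {G : Type*} [Group G] (g : G) (d : ℕ) (hd : 1 < d)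
    (ho : orderOf g = d) : (pIdem g d).coeff g = (d : ℂ)⁻¹ := by
  rw [pIdem_apply]
  have : ∀ t ∈ Finset.range d, (if g ^ t = g then (1:ℂ) else 0) = if t = 1 then 1 else 0 := by
    intro t ht
    rw [Finset.mem_range] at ht
    congr 1
    have : g ^ t = g ^ 1 ↔ t = 1 := by
      rw [pow_eq_pow_iff_modEq, ho, Nat.ModEq]
      rw [Nat.mod_eq_of_lt ht, Nat.mod_eq_of_lt hd]
    simpa using this
  rw [Finset.sum_congr rfl this, Finset.sum_ite_eq' (Finset.range d) 1 (fun _ => (1:ℂ))]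
  simp [Finset.mem_range.mpr hd]

open Classical in
lemma pIdem_apply_ne {G : Type*} [Group G] (g h : G) (d : ℕ) (ho : orderOf g = d)
    (hnd : ¬ orderOf h ∣ d) : (pIdem g d).coeff h = 0 := by
  rw [pIdem_apply]
  have h0 : ∀ t ∈ Finset.range d, (if g ^ t = h then (1:ℂ) else 0) = 0 := by
    intro t _
    rw [if_neg]
    intro he
    exact hnd (he ▸ (ho ▸ orderOf_pow_dvd t))
  rw [Finset.sum_congr rfl h0]
  simp

/-- Let `g₁, …, g_k` be torsion elements of pairwise distinct finite orders
`d₁, …, d_k > 1`.  Then the family `1, p_{g₁}, …, p_{g_k}` is linearly independent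
over `ℂ` in the complex group algebra `ℂ[G]`. -/
theorem linearIndependent_one_pIdem {G : Type*} [Group G] (k : ℕ)
    (g : Fin k → G) (d : Fin k → ℕ)
    (hd : ∀ i, 1 < d i) (hinj : Function.Injective d)
    (horder : ∀ i, orderOf (g i) = d i) :
    LinearIndependent ℂ
      (Fin.cons (1 : MonoidAlgebra ℂ G) (fun i => pIdem (g i) (d i)) :
        Fin (k + 1) → MonoidAlgebra ℂ G) := by
  classical
  rw [Fintype.linearIndependent_iff]
  intro c hc
  rw [Fin.sum_univ_succ] at hc
  simp only [Fin.cons_zero, Fin.cons_succ] at hc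
  -- hc : c 0 • 1 + ∑ i, c i.succ • pIdem (g i) (d i) = 0
  have hgne : ∀ i, g i ≠ 1 := by
    intro i h
    have := horder i
    rw [h, orderOf_one] at this
    exact absurd (this ▸ hd i) (by omega)
  set N := (Finset.univ.sup d) + 1 with hN
  have hdN : ∀ i, d i < N := fun i => Nat.lt_succ_of_le (Finset.le_sup (Finset.mem_univ i))
  have key : ∀ n : ℕ, ∀ i : Fin k, N - d i ≤ n → c i.succ = 0 := by
    intro n
    induction n using Nat.strong_induction_on with
    | _ n IH =>
      intro i hi
      have heval := congrArg (fun x : MonoidAlgebra ℂ G => x.coeff (g i)) hc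
      simp only [MonoidAlgebra.coeff_zero, Finsupp.coe_zero, Pi.zero_apply] at heval
      rw [MonoidAlgebra.coeff_add, Finsupp.add_apply, MonoidAlgebra.coeff_smul_apply, MonoidAlgebra.coeff_sum, Finsupp.finset_sum_apply] at heval
      have h1 : (1 : MonoidAlgebra ℂ G).coeff (g i) = 0 := by
        rw [MonoidAlgebra.one_def, MonoidAlgebra.coeff_single, Finsupp.single_apply, if_neg (fun h => hgne i h.symm)]
      rw [h1, smul_zero, zero_add] at heval
      have hterm : ∀ j ∈ Finset.univ, j ≠ i →
          (c j.succ • pIdem (g j) (d j)).coeff (g i) = 0 := by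
        intro j _ hji
        rcases lt_or_ge (d i) (d j) with hlt | hle
        · have : c j.succ = 0 := by
            refine IH (N - d j) ?_ j le_rfl
            have : N - d j < N - d i := Nat.sub_lt_sub_left (hdN i) hlt
            omega
          rw [MonoidAlgebra.coeff_smul_apply, this, zero_smul]
        · have hne : d j ≠ d i := fun h => hji (hinj h)
          have hdvd : ¬ orderOf (g i) ∣ d j := by
            rw [horder i]
            intro hdvd
            have := Nat.le_of_dvd (by have := hd j; omega) hdvd
            omega
          rw [MonoidAlgebra.coeff_smul_apply, pIdem_apply_ne (g j) (g i) (d j) (horder j) hdvd,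
            smul_zero]
      rw [Finset.sum_eq_single_of_mem i (Finset.mem_univ i) hterm] at heval
      rw [MonoidAlgebra.coeff_smul_apply, pIdem_apply_self (g i) (d i) (hd i) (horder i)] at heval
      have hdi : ((d i : ℂ))⁻¹ ≠ 0 := by
        simp only [ne_eq, inv_eq_zero, Nat.cast_eq_zero]
        have := hd i; omega
      rw [smul_eq_mul, mul_eq_zero] at heval
      tauto
  have hcs : ∀ j : Fin k, c j.succ = 0 := fun j => key (N - d j) j le_rfl
  have hc0 : c 0 = 0 := by
    have : (∑ j : Fin k, c j.succ • pIdem (g j) (d j)) = 0 := by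
      apply Finset.sum_eq_zero
      intro j _
      rw [hcs j, zero_smul]
    rw [this, add_zero, smul_eq_zero] at hc
    exact hc.resolve_right one_ne_zero
  intro i
  refine Fin.cases hc0 hcs i
end

section
/- Let G be a group, g ∈ G of finite order d > 0, p_g the associated idempotent, and C(g) the conjugacy class of g. Then τ_{C(g)}(p_g) is a real number and τ_{C(g)}(p_g) ≥ 1/d; in fact τ_{C(g)}(p_g) = m/d where m is the number of exponents t with 0 ≤ t < d such that g^t is conjugate to g, and m ≥ 1. -/
open scoped Classical

/-- The conjugacy-class functional `τ_C(f) = ∑_{g ∈ C} f(g)` on `ℂ[G]`. -/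
noncomputable def tauC {G : Type*} [Group G] (C : Set G) (f : MonoidAlgebra ℂ G) : ℂ :=
  ∑ g ∈ f.coeff.support, C.indicator (fun x => f.coeff x) g

lemma pIdem_apply_s4 {G : Type*} [Group G] (g : G) (d : ℕ)
    (hg : orderOf g = d) (s : ℕ) (hs : s < d) :
    (pIdem g d).coeff (g ^ s) = (d : ℂ)⁻¹ := by
  simp only [pIdem]
  rw [MonoidAlgebra.coeff_smul_apply, MonoidAlgebra.coeff_sum, Finset.sum_apply']
  simp only [MonoidAlgebra.of_apply, MonoidAlgebra.coeff_single, Finsupp.single_apply]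
  rw [Finset.sum_eq_single s]
  · simp
  · intro t ht hne
    rw [if_neg]
    intro h
    exact hne (pow_injOn_Iio_orderOf (x := g) (by simp [hg, Finset.mem_range.mp ht])
      (by simp [hg, hs]) h)
  · intro h; exact absurd (Finset.mem_range.mpr hs) h

lemma pIdem_support_subset {G : Type*} [Group G] (g : G) (d : ℕ) :
    (pIdem g d).coeff.support ⊆ (Finset.range d).image (g ^ ·) := by
  intro x hx
  have h1 : (pIdem g d).coeff.support ⊆
      (∑ t ∈ Finset.range d, MonoidAlgebra.of ℂ G (g ^ t)).coeff.support :=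
    Finsupp.support_smul
  have h2 := Finsupp.support_finset_sum (s := Finset.range d)
      (f := fun t => (MonoidAlgebra.of ℂ G (g ^ t)).coeff)
      (by rw [← MonoidAlgebra.coeff_sum]; exact h1 hx)
  simp only [Finset.mem_biUnion] at h2
  obtain ⟨t, ht, hxt⟩ := h2
  have : x = g ^ t := by
    have := Finsupp.mem_support_iff.mp hxt
    by_contra hne
    exact this (Finsupp.single_eq_of_ne (by simpa [eq_comm] using hne))
  exact Finset.mem_image.mpr ⟨t, ht, this.symm⟩

/-- For `g` of finite order `d > 0`, `τ_{C(g)}(p_g) = m/d`, where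
`m = #{t | 0 ≤ t < d, g^t conjugate to g}`; moreover `m ≥ 1`, so
`τ_{C(g)}(p_g)` is the real number `m/d ≥ 1/d`. -/
theorem tauC_pIdem_eq {G : Type*} [Group G] (g : G) (d : ℕ) (hd : 0 < d)
    (hg : orderOf g = d) :
    tauC {h : G | IsConj g h} (pIdem g d)
      = ((((Finset.range d).filter fun t => IsConj g (g ^ t)).card : ℂ) / d) ∧
    1 ≤ (((Finset.range d).filter fun t => IsConj g (g ^ t)).card) ∧
    (1 : ℝ) / d ≤ ((((Finset.range d).filter fun t => IsConj g (g ^ t)).card : ℝ) / d) := by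
  have hinj : Set.InjOn (g ^ ·) (Finset.range d) := by
    intro a ha b hb h
    exact pow_injOn_Iio_orderOf (x := g) (by simpa [hg] using Finset.mem_range.mp ha)
      (by simpa [hg] using Finset.mem_range.mp hb) h
  have hm : 1 ≤ (((Finset.range d).filter fun t => IsConj g (g ^ t)).card) := by
    rw [Nat.one_le_iff_ne_zero, ← Nat.pos_iff_ne_zero, Finset.card_pos]
    refine ⟨1 % d, Finset.mem_filter.mpr ⟨Finset.mem_range.mpr (Nat.mod_lt _ hd), ?_⟩⟩
    have : g ^ (1 % d) = g := by
      rw [← hg, pow_mod_orderOf, pow_one]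
    rw [this]
  refine ⟨?_, hm, ?_⟩
  · rw [tauC]
    rw [Finset.sum_subset (pIdem_support_subset g d)
      (fun x _ hx => by
        rw [Set.indicator_apply_eq_zero]
        intro _
        exact Finsupp.notMem_support_iff.mp hx)]
    rw [Finset.sum_image (fun a ha b hb h => hinj ha hb h)]
    have : ∀ t ∈ Finset.range d,
        ({h : G | IsConj g h}.indicator (fun x => (pIdem g d).coeff x) (g ^ t))
        = if IsConj g (g ^ t) then (d : ℂ)⁻¹ else 0 := by
      intro t ht
      simp only [Set.indicator_apply, Set.mem_setOf_eq]
      split_ifs with h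
      · exact pIdem_apply_s4 g d hg t (Finset.mem_range.mp ht)
      · rfl
    rw [Finset.sum_congr rfl this, ← Finset.sum_filter, Finset.sum_const,
      nsmul_eq_mul, div_eq_mul_inv]
  · have hd' : (0 : ℝ) < d := by exact_mod_cast hd
    gcongr
    exact_mod_cast hm
end

section
/- Let G be a group with a length function l, and let C ⊆ G be a conjugacy class of polynomial growth with respect to l. Then there exist a real number s ≥ 0 and a constant K > 0 such that for every f ∈ ℂ[G], |∑_{g ∈ C} f(g)| ≤ K · (∑_{g ∈ G} |f(g)|² (1 + l(g))^{2s})^{1/2}. In other words, the conjugacy-class functional τ_C extends to a bounded linear functional on the Sobolev completion H^s(G) for sufficiently large s. -/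
private lemma basel_aux (N : ℕ) :
    ∑ n ∈ Finset.range N, ((1 + (n:ℝ))^2)⁻¹ ≤ 2 - 2/((N:ℝ)+1) := by
  induction N with
  | zero => simp
  | succ N ih =>
    rw [Finset.sum_range_succ]
    have h1 : (0:ℝ) < (N:ℝ) + 1 := by positivity
    have key : ((1 + (N:ℝ))^2)⁻¹ ≤ 2/((N:ℝ)+1) - 2/((N:ℝ)+1+1) := by
      rw [div_sub_div _ _ h1.ne' (by linarith : ((N:ℝ)+1+1) ≠ 0), inv_eq_one_div,
        div_le_div_iff₀ (by positivity) (by positivity)]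
      nlinarith
    push_cast
    linarith

/-- Tail sum bound: for a finite subset `T` whose fibers under `l` have
cardinality at most `K (1+n)^m`, the sum of `(1+l g)^{-(m+2)}` is at most `2(K+1)`. -/
private lemma tail_sum_le {G : Type*} (l : G → ℕ) (K m : ℕ) (T : Finset G)
    (hcard : ∀ n : ℕ, ((T.filter fun g => l g = n).card : ℝ) ≤ (K : ℝ) * (1 + n) ^ m) :
    ∑ g ∈ T, ((1 + (l g : ℝ)) ^ (m + 2))⁻¹ ≤ 2 * ((K : ℝ) + 1) := by
  classical
  rw [Finset.sum_comp (fun n : ℕ => ((1 + (n:ℝ)) ^ (m + 2))⁻¹) l]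
  obtain ⟨N, hN⟩ := (T.image l).exists_nat_subset_range
  calc ∑ n ∈ T.image l, (T.filter fun g => l g = n).card • ((1 + (n:ℝ)) ^ (m + 2))⁻¹
      ≤ ∑ n ∈ T.image l, (K : ℝ) * ((1 + (n:ℝ))^2)⁻¹ := by
        refine Finset.sum_le_sum fun n _ => ?_
        rw [nsmul_eq_mul]
        have hb : (0:ℝ) < 1 + (n:ℝ) := by positivity
        have : ((1 + (n:ℝ)) ^ (m + 2))⁻¹ = ((1 + (n:ℝ)) ^ m)⁻¹ * ((1 + (n:ℝ))^2)⁻¹ := by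
          rw [pow_add, mul_inv]
        rw [this, ← mul_assoc]
        refine mul_le_mul_of_nonneg_right ?_ (by positivity)
        calc ((T.filter fun g => l g = n).card : ℝ) * ((1 + (n:ℝ)) ^ m)⁻¹
              ≤ ((K : ℝ) * (1 + n) ^ m) * ((1 + (n:ℝ)) ^ m)⁻¹ := by
                gcongr; exact hcard n
            _ = K := by field_simp
    _ ≤ ∑ n ∈ Finset.range N, (K : ℝ) * ((1 + (n:ℝ))^2)⁻¹ :=
        Finset.sum_le_sum_of_subset_of_nonneg hN (fun n _ _ => by positivity)
    _ = (K : ℝ) * ∑ n ∈ Finset.range N, ((1 + (n:ℝ))^2)⁻¹ := by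
        rw [Finset.mul_sum]
    _ ≤ (K : ℝ) * 2 := by
        have h2 : (0:ℝ) < (N:ℝ) + 1 := by positivity
        have := basel_aux N
        have hd : 0 ≤ 2/((N:ℝ)+1) := by positivity
        exact mul_le_mul_of_nonneg_left (by linarith) (by positivity)
    _ ≤ 2 * ((K : ℝ) + 1) := by linarith



/-- A length function on a group `G`: `l(1) = 0`, `l(g⁻¹) = l(g)`,
`l(gh) ≤ l(g) + l(h)`, and every sphere `{g | l(g) = n}` is finite. -/
structure IsLengthFunction {G : Type*} [Group G] (l : G → ℕ) : Prop where
  map_one : l 1 = 0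
  map_inv : ∀ g : G, l g⁻¹ = l g
  map_mul : ∀ g h : G, l (g * h) ≤ l g + l h
  finite_spheres : ∀ n : ℕ, {g : G | l g = n}.Finite

/-- The Sobolev `H^s` norm `‖f‖_{H^s} = (∑_g |f(g)|² (1 + l(g))^{2s})^{1/2}` on `ℂ[G]`. -/
noncomputable def hsNorm {G : Type*} [Group G] (l : G → ℕ) (s : ℝ)
    (f : MonoidAlgebra ℂ G) : ℝ :=
  Real.sqrt (∑ g ∈ f.coeff.support, ‖f.coeff g‖ ^ 2 * (1 + (l g : ℝ)) ^ (2 * s))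

/-- If a conjugacy class `C` has polynomial growth with respect to a length function `l`,
then the conjugacy-class functional `τ_C` is bounded with respect to the Sobolev `H^s`
norm for some `s ≥ 0`. -/
theorem tauC_bounded_of_polyGrowth {G : Type*} [Group G] (l : G → ℕ)
    (hl : IsLengthFunction l) (g₀ : G) (C : Set G) (hC : C = {h : G | IsConj g₀ h})
    (hpoly : ∃ K m : ℕ, ∀ n : ℕ, ({g ∈ C | l g = n} : Set G).ncard ≤ K * (1 + n) ^ m) :
    ∃ s : ℝ, 0 ≤ s ∧ ∃ K : ℝ, 0 < K ∧
      ∀ f : MonoidAlgebra ℂ G, ‖tauC C f‖ ≤ K * hsNorm l s f := by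
  classical
  obtain ⟨K, m, hKm⟩ := hpoly
  set s : ℝ := ((m:ℝ) + 2) / 2 with hs_def
  have hs2 : 2 * s = ((m + 2 : ℕ) : ℝ) := by push_cast; ring
  refine ⟨s, by positivity, Real.sqrt (2 * ((K:ℝ) + 1)),
    Real.sqrt_pos.mpr (by positivity), fun f => ?_⟩
  set T : Finset G := f.coeff.support.filter (· ∈ C) with hT
  have hw : ∀ g : G, (0:ℝ) < 1 + (l g : ℝ) := fun g => by positivity
  -- step 1
  have h1 : ‖tauC C f‖ ≤ ∑ g ∈ T, ‖f.coeff g‖ := by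
    unfold tauC
    refine (norm_sum_le _ _).trans ?_
    rw [hT, Finset.sum_filter]
    refine Finset.sum_le_sum fun g _ => ?_
    by_cases hgC : g ∈ C <;> simp [Set.indicator, hgC]
  -- step 3: tail bound
  have hcard : ∀ n : ℕ, ((T.filter fun g => l g = n).card : ℝ) ≤ (K : ℝ) * (1 + n) ^ m := by
    intro n
    have hsub : ((T.filter fun g => l g = n) : Set G) ⊆ {g ∈ C | l g = n} := by
      intro g hg
      simp only [Finset.coe_filter, Set.mem_setOf_eq, hT, Finset.mem_filter] at hg ⊢
      exact ⟨hg.1.2, hg.2⟩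
    have hfin : ({g ∈ C | l g = n} : Set G).Finite :=
      (hl.finite_spheres n).subset (fun g hg => hg.2)
    have := (Set.ncard_le_ncard hsub hfin).trans (hKm n)
    rw [Set.ncard_coe_finset] at this
    exact_mod_cast this
  have h3 : ∑ g ∈ T, ((1 + (l g : ℝ)) ^ (2 * s))⁻¹ ≤ 2 * ((K:ℝ) + 1) := by
    have : ∀ g : G, (1 + (l g : ℝ)) ^ (2 * s) = (1 + (l g : ℝ)) ^ (m + 2) := fun g => by
      rw [hs2, Real.rpow_natCast]
    simp only [this]
    exact tail_sum_le l K m T hcard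
  -- step 2: Cauchy-Schwarz
  have h2 : (∑ g ∈ T, ‖f.coeff g‖) ^ 2 ≤
      (∑ g ∈ T, ‖f.coeff g‖ ^ 2 * (1 + (l g : ℝ)) ^ (2 * s)) *
      (∑ g ∈ T, ((1 + (l g : ℝ)) ^ (2 * s))⁻¹) := by
    have hcs := Finset.sum_mul_sq_le_sq_mul_sq T
      (fun g => ‖f.coeff g‖ * (1 + (l g : ℝ)) ^ s)
      (fun g => ((1 + (l g : ℝ)) ^ s)⁻¹)
    have e1 : ∀ g : G, ‖f.coeff g‖ * (1 + (l g : ℝ)) ^ s * ((1 + (l g : ℝ)) ^ s)⁻¹ = ‖f.coeff g‖ := by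
      intro g
      have : (1 + (l g : ℝ)) ^ s ≠ 0 := (Real.rpow_pos_of_pos (hw g) s).ne'
      field_simp
    have hsq : ∀ g : G, ((1 + (l g : ℝ)) ^ s) ^ 2 = (1 + (l g : ℝ)) ^ (2 * s) := by
      intro g
      rw [← Real.rpow_natCast ((1 + (l g : ℝ)) ^ s) 2, ← Real.rpow_mul (hw g).le]
      norm_num [mul_comm]
    have e2 : ∀ g : G, (‖f.coeff g‖ * (1 + (l g : ℝ)) ^ s) ^ 2 =
        ‖f.coeff g‖ ^ 2 * (1 + (l g : ℝ)) ^ (2 * s) := by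
      intro g
      rw [mul_pow, hsq g]
    have e3 : ∀ g : G, (((1 + (l g : ℝ)) ^ s)⁻¹) ^ 2 = ((1 + (l g : ℝ)) ^ (2 * s))⁻¹ := by
      intro g
      rw [inv_pow, hsq g]
    simpa only [e1, e2, e3] using hcs
  -- step 4: combine
  have h4 : ∑ g ∈ T, ‖f.coeff g‖ ^ 2 * (1 + (l g : ℝ)) ^ (2 * s) ≤
      ∑ g ∈ f.coeff.support, ‖f.coeff g‖ ^ 2 * (1 + (l g : ℝ)) ^ (2 * s) :=
    Finset.sum_le_sum_of_subset_of_nonneg (Finset.filter_subset _ _)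
      (fun g _ _ => by positivity)
  have hsum_nonneg : (0:ℝ) ≤ ∑ g ∈ f.coeff.support, ‖f.coeff g‖ ^ 2 * (1 + (l g : ℝ)) ^ (2 * s) :=
    Finset.sum_nonneg fun g _ => by positivity
  have htail_nonneg : (0:ℝ) ≤ ∑ g ∈ T, ((1 + (l g : ℝ)) ^ (2 * s))⁻¹ :=
    Finset.sum_nonneg fun g _ => by positivity
  have hfinal : (∑ g ∈ T, ‖f.coeff g‖) ^ 2 ≤
      (∑ g ∈ f.coeff.support, ‖f.coeff g‖ ^ 2 * (1 + (l g : ℝ)) ^ (2 * s)) * (2 * ((K:ℝ) + 1)) := by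
    calc (∑ g ∈ T, ‖f.coeff g‖) ^ 2 ≤ _ := h2
      _ ≤ _ := by gcongr
  have hTnn : (0:ℝ) ≤ ∑ g ∈ T, ‖f.coeff g‖ := Finset.sum_nonneg fun g _ => norm_nonneg _
  calc ‖tauC C f‖ ≤ ∑ g ∈ T, ‖f.coeff g‖ := h1
    _ = Real.sqrt ((∑ g ∈ T, ‖f.coeff g‖) ^ 2) := (Real.sqrt_sq hTnn).symm
    _ ≤ Real.sqrt ((∑ g ∈ f.coeff.support, ‖f.coeff g‖ ^ 2 * (1 + (l g : ℝ)) ^ (2 * s)) *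
        (2 * ((K:ℝ) + 1))) := Real.sqrt_le_sqrt hfinal
    _ = Real.sqrt (2 * ((K:ℝ) + 1)) * hsNorm l s f := by
        rw [Real.sqrt_mul hsum_nonneg, hsNorm, mul_comm]
end

section
/- Let G be a group with a length function l, and let C ⊆ G be a conjugacy class of superpolynomial growth with respect to l. Then for every real number s ≥ 0 the conjugacy-class functional τ_C is unbounded with respect to the H^s norm: for every constant K > 0 there exists f ∈ ℂ[G] with |∑_{g ∈ C} f(g)| > K · (∑_{g ∈ G} |f(g)|² (1 + l(g))^{2s})^{1/2}. -/
/-- A subset `C ⊆ G` has superpolynomial growth with respect to `l` if for all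
constants `K`, `m` there are infinitely many `n` with `|{g ∈ C | l g = n}| > K(1+n)^m`. -/
def SuperPolyGrowth {G : Type*} [Group G] (l : G → ℕ) (C : Set G) : Prop :=
  ∀ K m : ℕ, {n : ℕ | K * (1 + n) ^ m < ({g ∈ C | l g = n} : Set G).ncard}.Infinite

/-- If a conjugacy class `C` has superpolynomial growth with respect to a length
function `l`, then for every `s ≥ 0` the functional `τ_C` is unbounded with respect
to the `H^s` norm. -/
theorem tauC_unbounded_of_superPolyGrowth {G : Type*} [Group G] (l : G → ℕ)
    (hl : IsLengthFunction l) (g₀ : G) (C : Set G) (hC : C = {h : G | IsConj g₀ h})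
    (hsuper : SuperPolyGrowth l C) :
    ∀ s : ℝ, 0 ≤ s → ∀ K : ℝ, 0 < K →
      ∃ f : MonoidAlgebra ℂ G, K * hsNorm l s f < ‖tauC C f‖ := by
  intro s hs K hK
  classical
  set K' : ℕ := ⌊K ^ 2⌋₊ + 1 with hK'
  set m : ℕ := ⌈2 * s⌉₊ with hm
  obtain ⟨n, hn⟩ := (hsuper K' m).nonempty
  simp only [Set.mem_setOf_eq] at hn
  have hfin : ({g ∈ C | l g = n} : Set G).Finite :=
    (hl.finite_spheres n).subset fun g hg => hg.2
  set F : Finset G := hfin.toFinset with hF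
  have hNcard : ({g ∈ C | l g = n} : Set G).ncard = F.card :=
    Set.ncard_eq_toFinset_card _ hfin
  rw [hNcard] at hn
  set N : ℕ := F.card with hNdef
  have hN1 : 1 ≤ N := by
    have : 0 < K' * (1 + n) ^ m := by positivity
    omega
  set f : MonoidAlgebra ℂ G := MonoidAlgebra.ofCoeff (Finsupp.indicator F (fun _ _ => (1 : ℂ))) with hf
  have hsupp : f.coeff.support = F := by
    ext g
    by_cases hg : g ∈ F <;>
      simp [hf, MonoidAlgebra.coeff_ofCoeff, Finsupp.mem_support_iff, Finsupp.indicator_of_mem,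
        Finsupp.indicator_of_notMem, hg]
  have hfval : ∀ g ∈ F, f.coeff g = 1 := fun g hg => Finsupp.indicator_of_mem hg (fun _ _ => (1 : ℂ))
  have hmemC : ∀ g ∈ F, g ∈ C := by
    intro g hg
    exact (hfin.mem_toFinset.mp hg).1
  have hlen : ∀ g ∈ F, l g = n := by
    intro g hg
    exact (hfin.mem_toFinset.mp hg).2
  refine ⟨f, ?_⟩
  have htau : tauC C f = (N : ℂ) := by
    rw [tauC, hsupp]
    have hterm : ∀ g ∈ F, C.indicator (fun x => f.coeff x) g = 1 := fun g hg => by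
      rw [Set.indicator_of_mem (hmemC g hg), hfval g hg]
    rw [Finset.sum_congr rfl hterm, Finset.sum_const, nsmul_eq_mul, mul_one]
  have hb : (1 : ℝ) ≤ 1 + (n : ℝ) := le_add_of_nonneg_right (Nat.cast_nonneg n)
  have hb0 : (0 : ℝ) < 1 + (n : ℝ) := by positivity
  have hnorm : hsNorm l s f = Real.sqrt N * (1 + (n : ℝ)) ^ s := by
    rw [hsNorm, hsupp]
    have hterm : ∀ g ∈ F, ‖f.coeff g‖ ^ 2 * (1 + (l g : ℝ)) ^ (2 * s)
        = (1 + (n : ℝ)) ^ (2 * s) := fun g hg => by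
      rw [hfval g hg, hlen g hg]; simp
    rw [Finset.sum_congr rfl hterm, Finset.sum_const, nsmul_eq_mul]
    rw [show (1 + (n : ℝ)) ^ (2 * s) = ((1 + (n : ℝ)) ^ s) ^ 2 by
      rw [mul_comm, Real.rpow_mul hb0.le, Real.rpow_two]]
    rw [Real.sqrt_mul (by positivity), Real.sqrt_sq (by positivity)]
  rw [htau, hnorm]
  rw [Complex.norm_natCast]
  -- key inequality: K^2 * ((1+n)^s)^2 < N
  have hkey : K ^ 2 * ((1 + (n : ℝ)) ^ s) ^ 2 < (N : ℝ) := by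
    have h1 : ((1 + (n : ℝ)) ^ s) ^ 2 = (1 + (n : ℝ)) ^ (2 * s) := by
      rw [mul_comm, Real.rpow_mul hb0.le, Real.rpow_two]
    have h2 : (1 + (n : ℝ)) ^ (2 * s) ≤ (1 + (n : ℝ)) ^ (m : ℝ) :=
      Real.rpow_le_rpow_of_exponent_le hb (Nat.le_ceil _)
    have h3 : K ^ 2 < (K' : ℝ) := by
      rw [hK']; push_cast; exact Nat.lt_floor_add_one _
    have h4 : (K' : ℝ) * (1 + (n : ℝ)) ^ (m : ℝ) < N := by
      have := hn
      rw [Real.rpow_natCast]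
      exact_mod_cast this
    calc K ^ 2 * ((1 + (n : ℝ)) ^ s) ^ 2
        ≤ (K' : ℝ) * (1 + (n : ℝ)) ^ (m : ℝ) := by
          rw [h1]
          exact mul_le_mul h3.le h2 (by positivity) (by positivity)
      _ < N := h4
  have hN0 : (0 : ℝ) < N := by exact_mod_cast hN1
  refine lt_of_pow_lt_pow_left₀ 2 hN0.le ?_
  have hsqrt : Real.sqrt N ^ 2 = (N : ℝ) := Real.sq_sqrt hN0.le
  calc (K * (Real.sqrt N * (1 + (n : ℝ)) ^ s)) ^ 2
      = K ^ 2 * ((1 + (n : ℝ)) ^ s) ^ 2 * (N : ℝ) := by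
        rw [mul_pow, mul_pow, hsqrt]; ring
    _ < (N : ℝ) * (N : ℝ) := by
        exact mul_lt_mul_of_pos_right hkey hN0
    _ = (N : ℝ) ^ 2 := by ring
end

section
/- Let G be a group with a length function l, let h ∈ G, and suppose the conjugacy class C(h) of h has superpolynomial growth with respect to l. Let τ : ℂ[G] → ℂ be a trace which is bounded with respect to the H^s norm for some s ≥ 0, i.e., there is a constant K with |τ(f)| ≤ K‖f‖_{H^s} for all f ∈ ℂ[G]. Then τ(h) = 0, where h is viewed as a basis element of ℂ[G]. -/
/-- If the conjugacy class of `h` has superpolynomial growth with respect to a length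
function `l`, then any trace `τ` on `ℂ[G]` that is bounded with respect to some `H^s`
norm satisfies `τ(h) = 0`. -/
theorem trace_eq_zero_of_superPolyGrowth {G : Type*} [Group G] (l : G → ℕ)
    (hl : IsLengthFunction l) (h : G)
    (hsuper : SuperPolyGrowth l {x : G | IsConj h x})
    (τ : MonoidAlgebra ℂ G →ₗ[ℂ] ℂ)
    (htrace : ∀ a b : MonoidAlgebra ℂ G, τ (a * b) = τ (b * a))
    (s : ℝ) (hs : 0 ≤ s) (K : ℝ)
    (hbound : ∀ f : MonoidAlgebra ℂ G, ‖τ f‖ ≤ K * hsNorm l s f) :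
    τ (MonoidAlgebra.of ℂ G h) = 0 := by
  classical
  by_contra hc
  set c : ℂ := τ (MonoidAlgebra.of ℂ G h) with hcdef
  have hcn : 0 < ‖c‖ := norm_pos_iff.mpr hc
  -- τ is constant on the conjugacy class
  have hconj : ∀ x : G, IsConj h x → τ (MonoidAlgebra.single x 1) = c := by
    intro x hx
    obtain ⟨g, hg⟩ := isConj_iff.mp hx
    have : (MonoidAlgebra.single x (1:ℂ)) =
        (MonoidAlgebra.single g 1 * MonoidAlgebra.single h 1) *
          MonoidAlgebra.single g⁻¹ 1 := by
      rw [MonoidAlgebra.single_mul_single, MonoidAlgebra.single_mul_single, hg]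
      norm_num
    rw [this, htrace, MonoidAlgebra.single_mul_single, MonoidAlgebra.single_mul_single]
    simp [hcdef, MonoidAlgebra.of_apply, mul_assoc]
  -- pick constants
  set m : ℕ := ⌈2 * s⌉₊ with hm
  set K' : ℕ := ⌈(K / ‖c‖) ^ 2⌉₊ with hK'
  obtain ⟨n, hn⟩ := (hsuper K' m).nonempty
  simp only [Set.mem_setOf_eq] at hn
  -- the sphere-intersection as a finset
  have hfin : ({x : G | IsConj h x ∧ l x = n}).Finite :=
    (hl.finite_spheres n).subset (fun x hx => hx.2)
  set S : Finset G := hfin.toFinset with hS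
  rw [Set.ncard_eq_toFinset_card _ hfin] at hn
  set f : MonoidAlgebra ℂ G := ∑ x ∈ S, MonoidAlgebra.single x 1 with hf
  have hfapp : ∀ g : G, f.coeff g = if g ∈ S then 1 else 0 := by
    intro g
    rw [hf, MonoidAlgebra.coeff_sum, Finset.sum_apply']
    simp_rw [MonoidAlgebra.coeff_single_apply]
    exact Finset.sum_ite_eq' S g (fun _ => 1)
  have hsupp : f.coeff.support = S := by
    ext g
    simp [Finsupp.mem_support_iff, hfapp g]
  -- τ f
  have hτf : τ f = (S.card : ℂ) * c := by
    rw [hf, map_sum]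
    rw [Finset.sum_congr rfl (fun x hx => hconj x ((hfin.mem_toFinset.mp (hS ▸ hx)).1))]
    simp [mul_comm]
  have hτfn : ‖τ f‖ = (S.card : ℝ) * ‖c‖ := by
    rw [hτf, norm_mul]
    simp
  -- hsNorm f
  have hnormf : hsNorm l s f = Real.sqrt ((S.card : ℝ) * ((1 + (n:ℝ)) ^ s) ^ 2) := by
    rw [hsNorm, hsupp]
    congr 1
    rw [Finset.sum_congr rfl (fun g hg => ?_), Finset.sum_const, nsmul_eq_mul]
    have hg' := hfin.mem_toFinset.mp (hS ▸ hg)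
    rw [hfapp g, if_pos hg, hg'.2]
    rw [← Real.rpow_natCast ((1 + (n:ℝ))^s) 2, ← Real.rpow_mul (by positivity : (0:ℝ) ≤ 1 + (n:ℝ))]
    norm_num [mul_comm]
  have h1n : (1:ℝ) ≤ 1 + (n:ℝ) := le_add_of_nonneg_right (Nat.cast_nonneg n)
  have hsq : Real.sqrt ((S.card : ℝ) * ((1 + (n:ℝ)) ^ s) ^ 2)
      = Real.sqrt (S.card : ℝ) * (1 + (n:ℝ)) ^ s := by
    rw [Real.sqrt_mul (by positivity), Real.sqrt_sq (by positivity)]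
  have hb := hbound f
  rw [hτfn, hnormf, hsq] at hb
  -- S.card = sqrt * sqrt
  have hcard : (S.card : ℝ) = Real.sqrt (S.card : ℝ) * Real.sqrt (S.card : ℝ) :=
    (Real.mul_self_sqrt (by positivity)).symm
  have hSpos : 0 < S.card := lt_of_le_of_lt (Nat.zero_le _) hn
  have hsqrtpos : 0 < Real.sqrt (S.card : ℝ) := Real.sqrt_pos.mpr (by exact_mod_cast hSpos)
  have key : Real.sqrt (S.card : ℝ) * ‖c‖ ≤ K * (1 + (n:ℝ)) ^ s := by
    nlinarith [hb, hcard, hsqrtpos]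
  -- square it
  have key2 : (S.card : ℝ) * ‖c‖ ^ 2 ≤ K ^ 2 * ((1 + (n:ℝ)) ^ s) ^ 2 := by
    nlinarith [key, hsqrtpos.le, hcn.le, hcard,
      mul_nonneg hsqrtpos.le hcn.le]
  have key3 : (S.card : ℝ) ≤ (K / ‖c‖) ^ 2 * ((1 + (n:ℝ)) ^ s) ^ 2 := by
    rw [div_pow]
    rw [div_mul_eq_mul_div, le_div_iff₀ (by positivity)]
    nlinarith [key2]
  -- compare with K' (1+n)^m
  have hpow : ((1 + (n:ℝ)) ^ s) ^ 2 ≤ (1 + (n:ℝ)) ^ (m:ℕ) := by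
    rw [← Real.rpow_natCast ((1 + (n:ℝ))^s) 2, ← Real.rpow_mul (by positivity),
      ← Real.rpow_natCast (1 + (n:ℝ)) m]
    exact Real.rpow_le_rpow_of_exponent_le h1n (by rw [mul_comm]; exact Nat.le_ceil _)
  have hfinal : (S.card : ℝ) ≤ (K' : ℝ) * (1 + (n:ℝ)) ^ (m:ℕ) := by
    calc (S.card : ℝ) ≤ (K / ‖c‖) ^ 2 * ((1 + (n:ℝ)) ^ s) ^ 2 := key3
    _ ≤ (K' : ℝ) * (1 + (n:ℝ)) ^ (m:ℕ) := by
        apply mul_le_mul (Nat.le_ceil _) hpow (by positivity) (by positivity)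
  have hcast : ((K' * (1 + n) ^ m : ℕ) : ℝ) < (S.card : ℝ) := by exact_mod_cast hn
  push_cast at hcast
  linarith [hfinal, hcast]
end

section
/- Let G be a group with a length function l, and let g ∈ G be a torsion element of finite order d > 1 such that for every t with 0 < t < d the conjugacy class of g^t has superpolynomial growth with respect to l. Let τ : ℂ[G] → ℂ be a trace which is bounded with respect to the H^s norm for some s ≥ 0. Then τ(p_g) = τ(1)/d, where p_g is the idempotent associated to g. Consequently, 1 and p_g cannot be distinguished by H^s-bounded traces. -/
lemma trace_single_eq_zero {G : Type*} [Group G] (l : G → ℕ)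
    (hl : IsLengthFunction l) (x : G)
    (hsup : SuperPolyGrowth l {y : G | IsConj x y})
    (τ : MonoidAlgebra ℂ G →ₗ[ℂ] ℂ)
    (htrace : ∀ a b : MonoidAlgebra ℂ G, τ (a * b) = τ (b * a))
    (s : ℝ) (hs : 0 ≤ s) (K : ℝ) (hK : 0 ≤ K)
    (hbound : ∀ f : MonoidAlgebra ℂ G, ‖τ f‖ ≤ K * hsNorm l s f) :
    τ (MonoidAlgebra.of ℂ G x) = 0 := by
  classical
  set c := τ (MonoidAlgebra.of ℂ G x) with hc
  have hconj : ∀ y : G, IsConj x y → τ (MonoidAlgebra.of ℂ G y) = c := by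
    intro y hy
    obtain ⟨u, hu⟩ := isConj_iff.mp hy
    have h1 : (MonoidAlgebra.of ℂ G) y
        = MonoidAlgebra.of ℂ G u * (MonoidAlgebra.of ℂ G x * MonoidAlgebra.of ℂ G u⁻¹) := by
      rw [← hu]; simp [map_mul, mul_assoc]
    rw [h1, htrace, mul_assoc, ← map_mul, inv_mul_cancel, map_one, mul_one]
  have key : ∀ ε : ℝ, 0 < ε → ‖c‖ ≤ ε := by
    intro ε hε
    set m := ⌈2 * s⌉₊ with hm
    set K' := ⌈K ^ 2 / ε ^ 2⌉₊ with hK'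
    obtain ⟨n, hn⟩ := (hsup K' m).nonempty
    simp only [Set.mem_setOf_eq] at hn
    have hfin : ({y : G | IsConj x y ∧ l y = n} : Set G).Finite :=
      (hl.finite_spheres n).subset (fun y hy => hy.2)
    set F := hfin.toFinset with hF
    have hmemF : ∀ y : G, y ∈ F ↔ IsConj x y ∧ l y = n := by
      intro y; rw [hF, Set.Finite.mem_toFinset]; rfl
    have hNcard : ({y : G | IsConj x y ∧ l y = n} : Set G).ncard = F.card :=
      (Set.ncard_eq_toFinset_card _ hfin)
    rw [hNcard] at hn
    have hcard_pos : 0 < F.card := lt_of_le_of_lt (Nat.zero_le _) hn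
    set f : MonoidAlgebra ℂ G := ∑ y ∈ F, MonoidAlgebra.of ℂ G y with hf
    have hfapp : ∀ y : G, f.coeff y = if y ∈ F then 1 else 0 := by
      intro y
      rw [hf]
      rw [MonoidAlgebra.coeff_sum, Finsupp.finset_sum_apply]
      simp only [MonoidAlgebra.of_apply, MonoidAlgebra.coeff_single, Finsupp.single_apply]
      rw [Finset.sum_ite_eq' F y (fun _ => (1 : ℂ))]
    have hsupp : f.coeff.support = F := by
      ext y
      rw [Finsupp.mem_support_iff, hfapp]
      by_cases h : y ∈ F <;> simp [h]
    have hval : hsNorm l s f = Real.sqrt ((F.card : ℝ) * (1 + (n : ℝ)) ^ (2 * s)) := by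
      unfold hsNorm
      rw [hsupp]
      rw [Finset.sum_congr rfl (fun y hy => ?_), Finset.sum_const, nsmul_eq_mul]
      have hln : l y = n := ((hmemF y).mp hy).2
      rw [hfapp, if_pos hy, hln]
      simp
    have hτf : τ f = (F.card : ℂ) * c := by
      rw [hf, map_sum]
      rw [Finset.sum_congr rfl (fun y hy => hconj y ((hmemF y).mp hy).1)]
      rw [Finset.sum_const, nsmul_eq_mul]
    set N : ℝ := (F.card : ℝ) with hN
    set b : ℝ := 1 + (n : ℝ) with hb
    have hb1 : (1 : ℝ) ≤ b := by rw [hb]; linarith [Nat.cast_nonneg (α := ℝ) n]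
    set B : ℝ := b ^ (2 * s) with hB
    have hB0 : 0 ≤ B := by rw [hB]; positivity
    have hN1 : (1 : ℝ) ≤ N := by rw [hN]; exact_mod_cast hcard_pos
    have hτfn : ‖τ f‖ = N * ‖c‖ := by rw [hτf, norm_mul, Complex.norm_natCast]
    have hmain : N * ‖c‖ ≤ K * Real.sqrt (N * B) := by
      rw [← hτfn]
      have := hbound f
      rwa [hval] at this
    -- B ≤ b ^ m
    have hBm : B ≤ b ^ (m : ℝ) :=
      Real.rpow_le_rpow_of_exponent_le hb1 (Nat.le_ceil _)
    -- K' * b^m ≤ N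
    have hKN : (K' : ℝ) * b ^ (m : ℝ) ≤ N := by
      have : ((K' * (1 + n) ^ m : ℕ) : ℝ) ≤ N := by rw [hN]; exact_mod_cast hn.le
      rw [Real.rpow_natCast]
      push_cast at this
      linarith [this]
    have hKe : K ^ 2 ≤ (K' : ℝ) * ε ^ 2 := by
      have h := Nat.le_ceil (K ^ 2 / ε ^ 2)
      rw [div_le_iff₀ (by positivity)] at h
      exact h
    have hbm0 : 0 ≤ b ^ (m : ℝ) := by positivity
    have hchain : K ^ 2 * B ≤ N * ε ^ 2 := by
      nlinarith [sq_nonneg K, sq_nonneg ε]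
    have hNB0 : 0 ≤ N * B := by positivity
    have h2 : (K * Real.sqrt (N * B)) ^ 2 ≤ (N * ε) ^ 2 := by
      rw [mul_pow, Real.sq_sqrt hNB0]
      nlinarith
    have h3 : K * Real.sqrt (N * B) ≤ N * ε := by
      have h4 := Real.sqrt_le_sqrt h2
      rwa [Real.sqrt_sq (by positivity), Real.sqrt_sq (by positivity)] at h4
    have h5 : N * ‖c‖ ≤ N * ε := le_trans hmain h3
    exact le_of_mul_le_mul_left h5 (by linarith)
  have hnc : ‖c‖ = 0 := by
    by_contra h
    have h0 : 0 < ‖c‖ := lt_of_le_of_ne (norm_nonneg c) (Ne.symm h)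
    have := key (‖c‖ / 2) (by linarith)
    linarith
  exact norm_eq_zero.mp hnc

/-- Let `g` be torsion of order `d > 1` such that the conjugacy class of `g^t` has
superpolynomial growth for every `0 < t < d`.  Then any trace `τ` on `ℂ[G]` bounded
with respect to some `H^s` norm satisfies `τ(p_g) = τ(1)/d`; in particular `1` and
`p_g` cannot be distinguished by such traces. -/
theorem trace_pIdem_eq_of_superPolyGrowth {G : Type*} [Group G] (l : G → ℕ)
    (hl : IsLengthFunction l) (g : G) (d : ℕ) (hd : 1 < d) (hg : orderOf g = d)
    (hsuper : ∀ t : ℕ, 0 < t → t < d → SuperPolyGrowth l {x : G | IsConj (g ^ t) x})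
    (τ : MonoidAlgebra ℂ G →ₗ[ℂ] ℂ)
    (htrace : ∀ a b : MonoidAlgebra ℂ G, τ (a * b) = τ (b * a))
    (s : ℝ) (hs : 0 ≤ s) (K : ℝ)
    (hbound : ∀ f : MonoidAlgebra ℂ G, ‖τ f‖ ≤ K * hsNorm l s f) :
    τ (pIdem g d) = τ 1 / d := by
  have hnorm1 : hsNorm l s (1 : MonoidAlgebra ℂ G) = 1 := by
    unfold hsNorm
    rw [MonoidAlgebra.one_def, MonoidAlgebra.coeff_single,
      Finsupp.support_single_ne_zero _ (one_ne_zero : (1 : ℂ) ≠ 0)]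
    simp [hl.map_one]
  have hK : 0 ≤ K := by
    have h := hbound 1
    rw [hnorm1, mul_one] at h
    exact le_trans (norm_nonneg _) h
  have hvanish : ∀ t ∈ Finset.range d, t ≠ 0 → τ (MonoidAlgebra.of ℂ G (g ^ t)) = 0 := by
    intro t ht htne
    exact trace_single_eq_zero l hl (g ^ t)
      (hsuper t (Nat.pos_of_ne_zero htne) (Finset.mem_range.mp ht)) τ htrace s hs K hK hbound
  rw [pIdem, map_smul, map_sum,
    Finset.sum_eq_single_of_mem 0 (Finset.mem_range.mpr (by omega)) hvanish,
    pow_zero, map_one, smul_eq_mul, inv_mul_eq_div]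
end

section
/- Let G be a group with a length function l such that the conjugacy class of every element g ≠ 1 has superpolynomial growth with respect to l. Let τ : ℂ[G] → ℂ be a trace which is bounded with respect to the H^s norm for some s ≥ 0. Then τ is a scalar multiple of the canonical trace: τ(f) = τ(1) · f(1) for all f ∈ ℂ[G], where f(1) denotes the coefficient of the identity element. -/
set_option maxHeartbeats 1000000


lemma tau_conj_aux {G : Type*} [Group G] (τ : MonoidAlgebra ℂ G →ₗ[ℂ] ℂ)
    (htrace : ∀ a b : MonoidAlgebra ℂ G, τ (a * b) = τ (b * a)) {g x : G}
    (h : IsConj g x) :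
    τ (MonoidAlgebra.single x 1) = τ (MonoidAlgebra.single g 1) := by
  obtain ⟨c, hc⟩ := isConj_iff.mp h
  have h1 : (MonoidAlgebra.single x 1 : MonoidAlgebra ℂ G)
      = MonoidAlgebra.single c 1 * (MonoidAlgebra.single g 1 * MonoidAlgebra.single c⁻¹ 1) := by
    simp [MonoidAlgebra.single_mul_single, ← hc, mul_assoc]
  rw [h1, htrace]
  simp [MonoidAlgebra.single_mul_single, mul_assoc]

lemma tau_single_eq_zero_aux {G : Type*} [Group G] (l : G → ℕ)
    (hl : IsLengthFunction l)
    (τ : MonoidAlgebra ℂ G →ₗ[ℂ] ℂ)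
    (htrace : ∀ a b : MonoidAlgebra ℂ G, τ (a * b) = τ (b * a))
    (s : ℝ) (hs : 0 ≤ s) (K : ℝ)
    (hbound : ∀ f : MonoidAlgebra ℂ G, ‖τ f‖ ≤ K * hsNorm l s f)
    (g : G) (hg : SuperPolyGrowth l {x : G | IsConj g x}) :
    τ (MonoidAlgebra.single g 1) = 0 := by
  classical
  by_contra hne
  set c : ℝ := ‖τ (MonoidAlgebra.single g 1)‖ with hc
  have hcpos : 0 < c := by simpa [hc] using hne
  set m : ℕ := ⌈2 * s⌉₊ with hm
  set K₀ : ℕ := ⌈K ^ 2 / c ^ 2⌉₊ + 1 with hK₀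
  obtain ⟨n, hn⟩ := (hg K₀ m).nonempty
  simp only [Set.mem_setOf_eq] at hn
  have hSfin : ({x | IsConj g x ∧ l x = n} : Set G).Finite :=
    (hl.finite_spheres n).subset (fun x hx => hx.2)
  rw [Set.ncard_eq_toFinset_card _ hSfin] at hn
  set F : Finset G := hSfin.toFinset with hF
  set f : MonoidAlgebra ℂ G := ∑ x ∈ F, MonoidAlgebra.single x 1 with hfdef
  have hfapp : ∀ x : G, f.coeff x = if x ∈ F then 1 else 0 := by
    intro x
    rw [hfdef, MonoidAlgebra.coeff_sum, Finset.sum_apply']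
    simp [Finsupp.single_apply]
  have hsupp : f.coeff.support = F := by
    ext x
    simp only [Finsupp.mem_support_iff, hfapp]
    by_cases hx : x ∈ F <;> simp [hx]
  have hFmem : ∀ x ∈ F, IsConj g x ∧ l x = n := by
    intro x hx
    simpa using (Set.Finite.mem_toFinset hSfin).mp hx
  have htauf : τ f = (F.card : ℂ) * τ (MonoidAlgebra.single g 1) := by
    rw [hfdef, map_sum]
    rw [Finset.sum_congr rfl (fun x hx => tau_conj_aux τ htrace (hFmem x hx).1)]
    simp [mul_comm]
  set P : ℝ := 1 + (n : ℝ) with hP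
  have hP1 : (1 : ℝ) ≤ P := by
    rw [hP]; simp
  have hPpos : 0 < P := lt_of_lt_of_le one_pos hP1
  have hnorm : hsNorm l s f = Real.sqrt ((F.card : ℝ) * P ^ (2 * s)) := by
    unfold hsNorm
    rw [hsupp]
    congr 1
    have hterm : ∀ x ∈ F, ‖f.coeff x‖ ^ 2 * (1 + (l x : ℝ)) ^ (2 * s) = P ^ (2 * s) := by
      intro x hx
      rw [hfapp x, if_pos hx, (hFmem x hx).2]
      simp [hP]
    rw [Finset.sum_congr rfl hterm, Finset.sum_const, nsmul_eq_mul]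
  have hb := hbound f
  rw [hnorm] at hb
  have htn : ‖τ f‖ = (F.card : ℝ) * c := by
    rw [htauf]; simp [hc]
  rw [htn] at hb
  set N : ℝ := (F.card : ℝ) with hN
  have hNpos : (0 : ℝ) < N := by
    rw [hN]
    exact_mod_cast lt_of_le_of_lt (Nat.zero_le _) hn
  have hrpow_pos : 0 < P ^ (2 * s) := Real.rpow_pos_of_pos hPpos _
  have hsq : N ^ 2 * c ^ 2 ≤ K ^ 2 * (N * P ^ (2 * s)) := by
    have h1 : (N * c) ^ 2 ≤ (K * Real.sqrt (N * P ^ (2 * s))) ^ 2 := by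
      have hnn : 0 ≤ N * c := by positivity
      exact pow_le_pow_left₀ hnn hb 2
    have h2 : (K * Real.sqrt (N * P ^ (2 * s))) ^ 2
        = K ^ 2 * (N * P ^ (2 * s)) := by
      rw [mul_pow, Real.sq_sqrt (by positivity)]
    nlinarith [h1, h2]
  have hNc : N * c ^ 2 ≤ K ^ 2 * P ^ (2 * s) := by
    nlinarith [hsq, hNpos]
  have hNlb : (K₀ : ℝ) * P ^ (2 * s) < N := by
    have h1 : ((K₀ : ℝ)) * ((1 + n : ℕ) : ℝ) ^ m < N := by
      rw [hN]; exact_mod_cast hn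
    have h2 : P ^ (2 * s) ≤ P ^ (m : ℝ) :=
      Real.rpow_le_rpow_of_exponent_le hP1 (Nat.le_ceil _)
    have h3 : P ^ (m : ℝ) = ((1 + n : ℕ) : ℝ) ^ m := by
      rw [Real.rpow_natCast]
      push_cast [hP]
      ring
    calc (K₀ : ℝ) * P ^ (2 * s) ≤ (K₀ : ℝ) * ((1 + n : ℕ) : ℝ) ^ m := by
          rw [← h3]
          exact mul_le_mul_of_nonneg_left h2 (Nat.cast_nonneg _)
      _ < N := h1
  have hfin : (K₀ : ℝ) * c ^ 2 < K ^ 2 := by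
    have h1 : (K₀ : ℝ) * P ^ (2 * s) * c ^ 2 < N * c ^ 2 :=
      mul_lt_mul_of_pos_right hNlb (by positivity)
    have h2 : (K₀ : ℝ) * P ^ (2 * s) * c ^ 2 < K ^ 2 * P ^ (2 * s) := lt_of_lt_of_le h1 hNc
    nlinarith [h2, hrpow_pos]
  have hK₀lb : K ^ 2 / c ^ 2 < (K₀ : ℝ) := by
    calc K ^ 2 / c ^ 2 ≤ (⌈K ^ 2 / c ^ 2⌉₊ : ℝ) := Nat.le_ceil _
      _ < (K₀ : ℝ) := by rw [hK₀]; exact_mod_cast Nat.lt_succ_self _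
  have hlast : K ^ 2 < (K₀ : ℝ) * c ^ 2 := by
    rw [div_lt_iff₀ (by positivity)] at hK₀lb
    linarith
  linarith

/-- If the conjugacy class of every nontrivial element of `G` has superpolynomial
growth with respect to a length function `l`, then every trace `τ` on `ℂ[G]` bounded
with respect to some `H^s` norm is a scalar multiple of the canonical trace:
`τ(f) = τ(1) · f(1)` for all `f ∈ ℂ[G]`. -/
theorem trace_eq_canonical_of_superPolyGrowth {G : Type*} [Group G] (l : G → ℕ)
    (hl : IsLengthFunction l)
    (hsuper : ∀ g : G, g ≠ 1 → SuperPolyGrowth l {x : G | IsConj g x})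
    (τ : MonoidAlgebra ℂ G →ₗ[ℂ] ℂ)
    (htrace : ∀ a b : MonoidAlgebra ℂ G, τ (a * b) = τ (b * a))
    (s : ℝ) (hs : 0 ≤ s) (K : ℝ)
    (hbound : ∀ f : MonoidAlgebra ℂ G, ‖τ f‖ ≤ K * hsNorm l s f) :
    ∀ f : MonoidAlgebra ℂ G, τ f = τ 1 * f.coeff 1 := by
  intro f
  have hdecomp : f = ∑ g ∈ f.coeff.support, MonoidAlgebra.single g (f.coeff g) := by
    exact (MonoidAlgebra.sum_coeff_single f).symm
  have hterm : ∀ g : G, τ (MonoidAlgebra.single g (f.coeff g)) = f.coeff g * τ (MonoidAlgebra.single g 1) := by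
    intro g
    have : (MonoidAlgebra.single g (f.coeff g) : MonoidAlgebra ℂ G)
        = f.coeff g • MonoidAlgebra.single g 1 := by
      rw [MonoidAlgebra.smul_single]; simp
    rw [this, map_smul, smul_eq_mul]
  conv_lhs => rw [hdecomp]
  rw [map_sum]
  rw [Finset.sum_congr rfl (fun g _ => hterm g)]
  have hzero : ∀ g ∈ f.coeff.support, g ≠ 1 → f.coeff g * τ (MonoidAlgebra.single g 1) = 0 := by
    intro g _ hg1
    rw [tau_single_eq_zero_aux l hl τ htrace s hs K hbound g (hsuper g hg1)]
    ring
  rw [Finset.sum_eq_single 1 hzero (fun h1 => by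
    simp [Finsupp.notMem_support_iff.mp h1])]
  rw [MonoidAlgebra.one_def]
  ring
end

section
/- Let G = (ℤ/3ℤ) ∗ ℤ be the free product of the cyclic group of order 3 (with generator x) and the infinite cyclic group (with generator y). For a natural number m and a function a : Fin m → {1, 2}, define g_a = ∏_{i=0}^{m-1} (y · x^{a(i)} · y · x^{3 - a(i)} · y) ∈ G. Then the map a ↦ g_a · x · g_a⁻¹ from {1,2}^{Fin m} to the conjugacy class of x in G is injective; in particular, the conjugacy class of x contains at least 2^m distinct elements of the form g_a x g_a⁻¹ for each m. -/
open Monoid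

/-- The free product `G = (ℤ/3ℤ) ∗ ℤ`, with `x` the image of a generator of `ℤ/3ℤ`
and `y` the image of a generator of `ℤ`. -/
noncomputable def Gfp : Type := Monoid.Coprod (Multiplicative (ZMod 3)) (Multiplicative ℤ)

noncomputable instance : Group Gfp := by unfold Gfp; infer_instance

/-- `x`: the order-3 torsion generator. -/
noncomputable def xfp : Gfp := Coprod.inl (Multiplicative.ofAdd (1 : ZMod 3))

/-- `y`: the infinite-order generator. -/
noncomputable def yfp : Gfp := Coprod.inr (Multiplicative.ofAdd (1 : ℤ))

/-- For `a : Fin m → Fin 2` (encoding exponents `a(i) + 1 ∈ {1, 2}`), the word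
`g_a = ∏_{i=0}^{m-1} (y · x^{a(i)} · y · x^{3-a(i)} · y)`. -/
noncomputable def gword {m : ℕ} (a : Fin m → Fin 2) : Gfp :=
  (List.ofFn fun i : Fin m =>
    yfp * xfp ^ ((a i : ℕ) + 1) * yfp * xfp ^ (3 - ((a i : ℕ) + 1)) * yfp).prod

/-! ### A concrete normal-form machine for `(ℤ/3ℤ) ∗ ℤ` -/

abbrev LL : Type := ZMod 3 ⊕ ℤ

def nzL : LL → Prop
  | .inl c => c ≠ 0
  | .inr k => k ≠ 0

def altL : LL → LL → Prop := fun p q => p.isLeft ≠ q.isLeft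

def VA (l : List LL) : Prop := l.Chain' altL ∧ ∀ e ∈ l, nzL e

def Sfp : Type := {l : List LL // VA l}

attribute [reducible] Sfp

def mX (c : ZMod 3) : List LL → List LL
  | [] => if c = 0 then [] else [.inl c]
  | .inl d :: t => if c + d = 0 then t else .inl (c + d) :: t
  | .inr k :: t => if c = 0 then .inr k :: t else .inl c :: .inr k :: t

def mY (k : ℤ) : List LL → List LL
  | [] => if k = 0 then [] else [.inr k]
  | .inl d :: t => if k = 0 then .inl d :: t else .inr k :: .inl d :: t
  | .inr j :: t => if k + j = 0 then t else .inr (k + j) :: t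

lemma VA_nil : VA ([] : List LL) := ⟨List.isChain_nil, by simp⟩

lemma VA_tail {e : LL} {t : List LL} (h : VA (e :: t)) : VA t :=
  ⟨(List.isChain_cons.1 h.1).2, fun x hx => h.2 x (List.mem_cons_of_mem _ hx)⟩

lemma VA_mX (c : ZMod 3) {l : List LL} (h : VA l) : VA (mX c l) := by
  match l with
  | [] =>
    by_cases hc : c = 0
    · simp only [mX, if_pos hc]; exact VA_nil
    · simp only [mX, if_neg hc]
      exact ⟨List.isChain_singleton _, by
        intro e he; rcases List.mem_singleton.1 he with rfl; exact hc⟩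
  | .inl d :: t =>
    by_cases hc : c + d = 0
    · simp only [mX, if_pos hc]; exact VA_tail h
    · simp only [mX, if_neg hc]
      refine ⟨List.isChain_cons.2 ⟨?_, (List.isChain_cons.1 h.1).2⟩, ?_⟩
      · intro y hy
        exact (List.isChain_cons.1 h.1).1 y hy
      · intro e he
        rcases List.mem_cons.1 he with rfl | he
        · exact hc
        · exact h.2 e (List.mem_cons_of_mem _ he)
  | .inr k :: t =>
    by_cases hc : c = 0
    · simp only [mX, if_pos hc]; exact h
    · simp only [mX, if_neg hc]
      refine ⟨List.isChain_cons_cons.2 ⟨by simp [altL], h.1⟩, ?_⟩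
      intro e he
      rcases List.mem_cons.1 he with rfl | he
      · exact hc
      · exact h.2 e he

lemma VA_mY (k : ℤ) {l : List LL} (h : VA l) : VA (mY k l) := by
  match l with
  | [] =>
    by_cases hc : k = 0
    · simp only [mY, if_pos hc]; exact VA_nil
    · simp only [mY, if_neg hc]
      exact ⟨List.isChain_singleton _, by
        intro e he; rcases List.mem_singleton.1 he with rfl; exact hc⟩
  | .inr j :: t =>
    by_cases hc : k + j = 0
    · simp only [mY, if_pos hc]; exact VA_tail h
    · simp only [mY, if_neg hc]
      refine ⟨List.isChain_cons.2 ⟨?_, (List.isChain_cons.1 h.1).2⟩, ?_⟩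
      · intro y hy
        exact (List.isChain_cons.1 h.1).1 y hy
      · intro e he
        rcases List.mem_cons.1 he with rfl | he
        · exact hc
        · exact h.2 e (List.mem_cons_of_mem _ he)
  | .inl d :: t =>
    by_cases hc : k = 0
    · simp only [mY, if_pos hc]; exact h
    · simp only [mY, if_neg hc]
      refine ⟨List.isChain_cons_cons.2 ⟨by simp [altL], h.1⟩, ?_⟩
      intro e he
      rcases List.mem_cons.1 he with rfl | he
      · exact hc
      · exact h.2 e he

lemma mX_zero {l : List LL} (h : VA l) : mX 0 l = l := by
  match l with
  | [] => simp [mX]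
  | .inl d :: t =>
    have hd : d ≠ 0 := h.2 (.inl d) (by simp)
    simp [mX, hd]
  | .inr k :: t => simp [mX]

lemma mY_zero {l : List LL} (h : VA l) : mY 0 l = l := by
  match l with
  | [] => simp [mY]
  | .inr j :: t =>
    have hd : j ≠ 0 := h.2 (.inr j) (by simp)
    simp [mY, hd]
  | .inl d :: t => simp [mY]

lemma mX_add (c d : ZMod 3) {l : List LL} (h : VA l) :
    mX (c + d) l = mX c (mX d l) := by
  by_cases hd : d = 0
  · rw [hd, add_zero, mX_zero h]
  match l with
  | [] =>
    simp only [mX, if_neg hd]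
  | .inl e :: t =>
    by_cases hde : d + e = 0
    · have hce : c + d + e = c := by rw [add_assoc, hde, add_zero]
      simp only [mX, if_pos hde, hce]
      match t with
      | [] => by_cases hc : c = 0 <;> simp [mX, hc]
      | .inr k :: t' => by_cases hc : c = 0 <;> simp [mX, hc]
      | .inl f :: t' =>
        exfalso
        have := (List.isChain_cons_cons.1 h.1).1
        simp [altL] at this
    · have h2 : c + d + e = c + (d + e) := by rw [add_assoc]
      simp only [mX, if_neg hde, h2]
  | .inr k :: t =>
    simp only [mX, if_neg hd]

lemma mY_add (c d : ℤ) {l : List LL} (h : VA l) :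
    mY (c + d) l = mY c (mY d l) := by
  by_cases hd : d = 0
  · rw [hd, add_zero, mY_zero h]
  match l with
  | [] =>
    simp only [mY, if_neg hd]
  | .inr e :: t =>
    by_cases hde : d + e = 0
    · have hce : c + d + e = c := by rw [add_assoc, hde, add_zero]
      simp only [mY, if_pos hde, hce]
      match t with
      | [] => by_cases hc : c = 0 <;> simp [mY, hc]
      | .inl k :: t' => by_cases hc : c = 0 <;> simp [mY, hc]
      | .inr f :: t' =>
        exfalso
        have := (List.isChain_cons_cons.1 h.1).1
        simp [altL] at this
    · have h2 : c + d + e = c + (d + e) := by rw [add_assoc]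
      simp only [mY, if_neg hde, h2]
  | .inl k :: t =>
    simp only [mY, if_neg hd]

/-! ### The homomorphism to `Function.End Sfp` -/

def endX : Multiplicative (ZMod 3) →* Function.End Sfp where
  toFun c s := ⟨mX c.toAdd s.1, VA_mX _ s.2⟩
  map_one' := funext fun s => Subtype.ext (mX_zero s.2)
  map_mul' c d := funext fun s => Subtype.ext (mX_add c.toAdd d.toAdd s.2)

def endY : Multiplicative ℤ →* Function.End Sfp where
  toFun k s := ⟨mY k.toAdd s.1, VA_mY _ s.2⟩
  map_one' := funext fun s => Subtype.ext (mY_zero s.2)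
  map_mul' c d := funext fun s => Subtype.ext (mY_add c.toAdd d.toAdd s.2)

noncomputable def phi : Gfp →* Function.End Sfp := Coprod.lift endX endY

lemma phi_inl (g : Multiplicative (ZMod 3)) (s : Sfp) :
    (phi (Coprod.inl g) s).1 = mX g.toAdd s.1 := by
  have h : phi (Coprod.inl g) = endX g := Coprod.lift_apply_inl endX endY g
  rw [h]; rfl

lemma phi_inr (g : Multiplicative ℤ) (s : Sfp) :
    (phi (Coprod.inr g) s).1 = mY g.toAdd s.1 := by
  have h : phi (Coprod.inr g) = endY g := Coprod.lift_apply_inr endX endY g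
  rw [h]; rfl

lemma phi_mul (g h : Gfp) (s : Sfp) : phi (g * h) s = phi g (phi h s) := by
  rw [map_mul]; rfl

lemma inl_mul (a b : Multiplicative (ZMod 3)) :
    (Coprod.inl a * Coprod.inl b : Gfp) = Coprod.inl (a * b) :=
  (map_mul (Coprod.inl : Multiplicative (ZMod 3) →* Monoid.Coprod (Multiplicative (ZMod 3)) (Multiplicative ℤ)) a b).symm

lemma inr_mul (a b : Multiplicative ℤ) :
    (Coprod.inr a * Coprod.inr b : Gfp) = Coprod.inr (a * b) :=
  (map_mul (Coprod.inr : Multiplicative ℤ →* Monoid.Coprod (Multiplicative (ZMod 3)) (Multiplicative ℤ)) a b).symm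

lemma inl_one : (Coprod.inl (1 : Multiplicative (ZMod 3)) : Gfp) = 1 :=
  map_one (Coprod.inl : Multiplicative (ZMod 3) →* Monoid.Coprod (Multiplicative (ZMod 3)) (Multiplicative ℤ))

lemma inr_one : (Coprod.inr (1 : Multiplicative ℤ) : Gfp) = 1 :=
  map_one (Coprod.inr : Multiplicative ℤ →* Monoid.Coprod (Multiplicative (ZMod 3)) (Multiplicative ℤ))

lemma xpow_eq (n : ℕ) : xfp ^ n = Coprod.inl (Multiplicative.ofAdd ((n : ZMod 3))) := by
  have h1 : (Multiplicative.ofAdd (1 : ZMod 3)) ^ n = Multiplicative.ofAdd ((n : ZMod 3)) := by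
    rw [← ofAdd_nsmul]; congr 1; simp
  have h2 : xfp ^ n = Coprod.inl ((Multiplicative.ofAdd (1 : ZMod 3)) ^ n) :=
    (map_pow (Coprod.inl : Multiplicative (ZMod 3) →* Monoid.Coprod (Multiplicative (ZMod 3)) (Multiplicative ℤ)) _ n).symm
  rw [h2, h1]

lemma xpow_inv_eq (n : ℕ) :
    (xfp ^ n)⁻¹ = Coprod.inl (Multiplicative.ofAdd (-(n : ZMod 3))) := by
  rw [xpow_eq]
  refine inv_eq_of_mul_eq_one_right ?_
  erw [inl_mul, ← ofAdd_add, add_neg_cancel, ofAdd_zero, inl_one]; rfl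

lemma yfp_inv_eq : yfp⁻¹ = Coprod.inr (Multiplicative.ofAdd (-1 : ℤ)) := by
  rw [yfp]
  refine inv_eq_of_mul_eq_one_right ?_
  erw [inr_mul, ← ofAdd_add, add_neg_cancel, ofAdd_zero, inr_one]; rfl

lemma phi_xpow (n : ℕ) (s : Sfp) : (phi (xfp ^ n) s).1 = mX (n : ZMod 3) s.1 := by
  rw [xpow_eq, phi_inl]; rfl

lemma phi_xpow_inv (n : ℕ) (s : Sfp) :
    (phi (xfp ^ n)⁻¹ s).1 = mX (-(n : ZMod 3)) s.1 := by
  rw [xpow_inv_eq, phi_inl]; rfl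

lemma phi_y (s : Sfp) : (phi yfp s).1 = mY 1 s.1 := by
  rw [yfp, phi_inr]; rfl

lemma phi_y_inv (s : Sfp) : (phi yfp⁻¹ s).1 = mY (-1) s.1 := by
  rw [yfp_inv_eq, phi_inr]; rfl

/-! ### The normal form of `g_a x g_a⁻¹` -/

def Wl : (m : ℕ) → (Fin m → Fin 2) → List LL → List LL
  | 0, _, t => .inl 1 :: t
  | m + 1, a, t =>
    .inr 1 :: .inl ((((a 0 : ℕ) + 1 : ℕ)) : ZMod 3) :: .inr 1 ::
      .inl (-((((a 0 : ℕ) + 1 : ℕ)) : ZMod 3)) ::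
      mY 1 (Wl m (Fin.tail a)
        (.inr (-1) :: .inl ((((a 0 : ℕ) + 1 : ℕ)) : ZMod 3) :: .inr (-1) ::
          .inl (-((((a 0 : ℕ) + 1 : ℕ)) : ZMod 3)) :: mY (-1) t))

lemma headW (m : ℕ) (a : Fin m → Fin 2) (t : List LL) :
    ∃ j r, mY 1 (Wl m a t) = .inr j :: r ∧ j ≠ 0 := by
  match m with
  | 0 => exact ⟨1, .inl 1 :: t, by simp [Wl, mY], one_ne_zero⟩
  | m + 1 =>
    simp only [Wl]
    rw [show ∀ l : List LL, mY 1 (.inr 1 :: l) = .inr 2 :: l from fun l => by norm_num [mY]]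
    exact ⟨2, _, rfl, two_ne_zero⟩

def Cnd (t : List LL) : Prop := t = [] ∨ ∃ k t', t = .inr k :: t' ∧ k < 0

lemma fin2_facts (v : Fin 2) :
    ((((v : ℕ) + 1 : ℕ)) : ZMod 3) ≠ 0 ∧
    (((3 - ((v : ℕ) + 1) : ℕ)) : ZMod 3) = -((((v : ℕ) + 1 : ℕ)) : ZMod 3) ∧
    -((((v : ℕ) + 1 : ℕ)) : ZMod 3) ≠ 0 := by
  have : (v : ℕ) = 0 ∨ (v : ℕ) = 1 := by omega
  rcases this with h | h <;> rw [h] <;> exact ⟨by decide, by decide, by decide⟩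

lemma main_eval (m : ℕ) (a : Fin m → Fin 2) (t : List LL) (h : VA t) (hC : Cnd t) :
    (phi (gword a * xfp * (gword a)⁻¹) ⟨t, h⟩).1 = Wl m a t := by
  induction m generalizing t h hC with
  | zero =>
    have hg : gword a * xfp * (gword a)⁻¹ = xfp := by
      have h1 : gword a = 1 := by simp [gword]
      rw [h1]; group
    rw [hg]
    have hx : (phi xfp ⟨t, h⟩).1 = mX 1 t := by
      rw [xfp, phi_inl]; rfl
    rw [hx]
    rcases hC with rfl | ⟨k, t', rfl, hk⟩
    · simp [mX, Wl]
    · simp [mX, Wl]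
  | succ m ih =>
    obtain ⟨hc1, hc2, hc3⟩ := fin2_facts (a 0)
    set c : ZMod 3 := ((((a 0 : ℕ) + 1 : ℕ)) : ZMod 3) with hcdef
    have hkey : gword a * xfp * (gword a)⁻¹ =
        yfp * (xfp ^ ((a 0 : ℕ) + 1) * (yfp * (xfp ^ (3 - ((a 0 : ℕ) + 1)) * (yfp *
          ((gword (Fin.tail a) * xfp * (gword (Fin.tail a))⁻¹) *
            (yfp⁻¹ * ((xfp ^ (3 - ((a 0 : ℕ) + 1)))⁻¹ * (yfp⁻¹ *
              ((xfp ^ ((a 0 : ℕ) + 1))⁻¹ * yfp⁻¹))))))))) := by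
      have hsplit : gword a =
          (yfp * xfp ^ ((a 0 : ℕ) + 1) * yfp * xfp ^ (3 - ((a 0 : ℕ) + 1)) * yfp) *
            gword (Fin.tail a) := by
        rw [gword, List.ofFn_succ, List.prod_cons]; rfl
      rw [hsplit]; group
    rw [hkey]
    rw [phi_mul, phi_mul, phi_mul, phi_mul, phi_mul, phi_mul]
    -- the inner `B⁻¹` part
    have hPval : (phi (yfp⁻¹ * ((xfp ^ (3 - ((a 0 : ℕ) + 1)))⁻¹ * (yfp⁻¹ *
        ((xfp ^ ((a 0 : ℕ) + 1))⁻¹ * yfp⁻¹)))) ⟨t, h⟩ : Sfp).1 =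
        .inr (-1) :: .inl c :: .inr (-1) :: .inl (-c) :: mY (-1) t := by
      rcases hC with rfl | ⟨k, t', rfl, hk⟩
      · simp only [phi_mul, phi_y_inv, phi_xpow_inv, hc2, ← hcdef]
        norm_num [mY, mX, hc1, hc3, neg_neg]
      · have hk1 : (-1 : ℤ) + k ≠ 0 := by omega
        simp only [phi_mul, phi_y_inv, phi_xpow_inv, hc2, ← hcdef]
        norm_num [mY, mX, hc1, hc3, neg_neg, hk1]
    have hVA1 : VA (.inr (-1) :: .inl c :: .inr (-1) :: .inl (-c) :: mY (-1) t) :=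
      hPval ▸ (phi (yfp⁻¹ * ((xfp ^ (3 - ((a 0 : ℕ) + 1)))⁻¹ * (yfp⁻¹ *
        ((xfp ^ ((a 0 : ℕ) + 1))⁻¹ * yfp⁻¹)))) ⟨t, h⟩).2
    have hP : phi (yfp⁻¹ * ((xfp ^ (3 - ((a 0 : ℕ) + 1)))⁻¹ * (yfp⁻¹ *
        ((xfp ^ ((a 0 : ℕ) + 1))⁻¹ * yfp⁻¹)))) ⟨t, h⟩ =
        (⟨.inr (-1) :: .inl c :: .inr (-1) :: .inl (-c) :: mY (-1) t, hVA1⟩ : Sfp) :=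
      Subtype.ext hPval
    rw [hP]
    have hQval : (phi (gword (Fin.tail a) * xfp * (gword (Fin.tail a))⁻¹)
        (⟨.inr (-1) :: .inl c :: .inr (-1) :: .inl (-c) :: mY (-1) t, hVA1⟩ : Sfp)).1 =
        Wl m (Fin.tail a) (.inr (-1) :: .inl c :: .inr (-1) :: .inl (-c) :: mY (-1) t) :=
      ih (Fin.tail a) _ hVA1 (Or.inr ⟨-1, _, rfl, by norm_num⟩)
    have hVA2 : VA (Wl m (Fin.tail a)
        (.inr (-1) :: .inl c :: .inr (-1) :: .inl (-c) :: mY (-1) t)) :=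
      hQval ▸ (phi (gword (Fin.tail a) * xfp * (gword (Fin.tail a))⁻¹)
        (⟨.inr (-1) :: .inl c :: .inr (-1) :: .inl (-c) :: mY (-1) t, hVA1⟩ : Sfp)).2
    have hQ : phi (gword (Fin.tail a) * xfp * (gword (Fin.tail a))⁻¹)
        (⟨.inr (-1) :: .inl c :: .inr (-1) :: .inl (-c) :: mY (-1) t, hVA1⟩ : Sfp) =
        (⟨Wl m (Fin.tail a) (.inr (-1) :: .inl c :: .inr (-1) :: .inl (-c) :: mY (-1) t),
          hVA2⟩ : Sfp) :=
      Subtype.ext hQval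
    rw [hQ]
    obtain ⟨j, r, hjr, hj⟩ := headW m (Fin.tail a)
      (.inr (-1) :: .inl c :: .inr (-1) :: .inl (-c) :: mY (-1) t)
    rw [phi_y, phi_xpow, phi_y, phi_xpow, phi_y, hc2, ← hcdef]
    show mY 1 (mX c (mY 1 (mX (-c) (mY 1 (Wl m (Fin.tail a)
        (.inr (-1) :: .inl c :: .inr (-1) :: .inl (-c) :: mY (-1) t)))))) = Wl (m + 1) a t
    rw [hjr]
    show _ = .inr 1 :: .inl c :: .inr 1 :: .inl (-c) :: mY 1 (Wl m (Fin.tail a)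
        (.inr (-1) :: .inl c :: .inr (-1) :: .inl (-c) :: mY (-1) t))
    rw [hjr]
    norm_num [mX, mY, hc1, hc3]

lemma mY1_cancel (m : ℕ) (a b : Fin m → Fin 2) (T T' : List LL)
    (h : mY 1 (Wl m a T) = mY 1 (Wl m b T')) : Wl m a T = Wl m b T' := by
  match m with
  | 0 =>
    simp only [Wl, mY] at h ⊢
    norm_num at h
    simp [h]
  | m + 1 =>
    have e : ∀ (g : Fin (m+1) → Fin 2) (u : List LL), Wl (m+1) g u = .inr 1 ::
        (.inl ((((g 0 : ℕ) + 1 : ℕ)) : ZMod 3) :: .inr 1 ::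
          .inl (-((((g 0 : ℕ) + 1 : ℕ)) : ZMod 3)) ::
          mY 1 (Wl m (Fin.tail g)
            (.inr (-1) :: .inl ((((g 0 : ℕ) + 1 : ℕ)) : ZMod 3) :: .inr (-1) ::
              .inl (-((((g 0 : ℕ) + 1 : ℕ)) : ZMod 3)) :: mY (-1) u))) := fun g u => rfl
    rw [e a T, e b T'] at h
    rw [e a T, e b T']
    rw [show ∀ l : List LL, mY 1 (.inr 1 :: l) = .inr 2 :: l from fun l => by norm_num [mY]] at h
    rw [show ∀ l : List LL, mY 1 (.inr 1 :: l) = .inr 2 :: l from fun l => by norm_num [mY]] at h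
    injection h with _ h2
    rw [h2]

lemma fin2_of_cast {u v : Fin 2}
    (h : ((((u : ℕ) + 1 : ℕ)) : ZMod 3) = ((((v : ℕ) + 1 : ℕ)) : ZMod 3)) : u = v := by
  have hu : (u : ℕ) = 0 ∨ (u : ℕ) = 1 := by omega
  have hv : (v : ℕ) = 0 ∨ (v : ℕ) = 1 := by omega
  rcases hu with hu | hu <;> rcases hv with hv | hv <;>
    rw [hu, hv] at h <;> first
  | (exact Fin.ext (by omega))
  | (exact absurd h (by decide))

lemma Wl_inj : ∀ (m : ℕ) (a b : Fin m → Fin 2) (t : List LL),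
    Wl m a t = Wl m b t → a = b := by
  intro m
  induction m with
  | zero =>
    intro a b t _
    funext i; exact absurd i.isLt (by omega)
  | succ m ih =>
    intro a b t hW
    simp only [Wl, List.cons.injEq, Sum.inl.injEq, Sum.inr.injEq] at hW
    obtain ⟨-, hc, -, -, htail⟩ := hW
    have h00 : a 0 = b 0 := fin2_of_cast hc
    rw [h00] at htail
    have htl : Fin.tail a = Fin.tail b := ih (Fin.tail a) (Fin.tail b) _ (mY1_cancel _ _ _ _ _ htail)
    funext i
    induction i using Fin.cases with
    | zero => exact h00
    | succ j => exact congrFun htl j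

/-- In `G = (ℤ/3ℤ) ∗ ℤ`, the map `a ↦ g_a x g_a⁻¹` on `{1,2}^m` is injective into the
conjugacy class of `x`; in particular that conjugacy class contains at least `2^m`
distinct elements of this form. -/
theorem gword_conj_injective (m : ℕ) :
    Function.Injective (fun a : Fin m → Fin 2 => gword a * xfp * (gword a)⁻¹) ∧
    (∀ a : Fin m → Fin 2, IsConj xfp (gword a * xfp * (gword a)⁻¹)) ∧
    2 ^ m ≤ Nat.card (Set.range fun a : Fin m → Fin 2 => gword a * xfp * (gword a)⁻¹) := by
  have hinj : Function.Injective (fun a : Fin m → Fin 2 => gword a * xfp * (gword a)⁻¹) := by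
    intro a b hab
    have hab' : gword a * xfp * (gword a)⁻¹ = gword b * xfp * (gword b)⁻¹ := hab
    have h1 : (phi (gword a * xfp * (gword a)⁻¹) ⟨[], VA_nil⟩).1 = Wl m a [] :=
      main_eval m a [] VA_nil (Or.inl rfl)
    have h2 : (phi (gword b * xfp * (gword b)⁻¹) ⟨[], VA_nil⟩).1 = Wl m b [] :=
      main_eval m b [] VA_nil (Or.inl rfl)
    rw [hab'] at h1
    exact Wl_inj m a b [] (h1 ▸ h2)
  refine ⟨hinj, fun a => isConj_iff.2 ⟨gword a, rfl⟩, ?_⟩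
  rw [Nat.card_range_of_injective hinj, Nat.card_eq_fintype_card]
  simp
end
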